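/- Let (G, G⁺) be a simple dimension group with exactly two extremal states σ₁, σ₂ and elements u¹, u² with σ₁(u¹) = σ₂(u²) = 1 and σ₁(u²) = σ₂(u¹) = 0. Then the image of the map σ(g) = (σ₁(g), σ₂(g)) is dense in ℝ². -/

import Mathlib

/-- `P` is the positive cone of an ordered abelian group structure on `G`. -/
def IsPosCone {G : Type*} [AddCommGroup G] (P : Set G) : Prop :=
  (∀ a ∈ P, ∀ b ∈ P, a + b ∈ P) ∧
  (∀ g : G, ∃ a ∈ P, ∃ b ∈ P, g = a - b) ∧
  (∀ a : G, a ∈ P → -a ∈ P → a = 0)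

/-- The ordered group `(G, P)` is unperforated. -/
def Unperforated {G : Type*} [AddCommGroup G] (P : Set G) : Prop :=
  ∀ (n : ℕ) (g : G), 0 < n → n • g ∈ P → g ∈ P

/-- The ordered group `(G, P)` satisfies Riesz interpolation. -/
def RieszInterp {G : Type*} [AddCommGroup G] (P : Set G) : Prop :=
  ∀ a₁ a₂ b₁ b₂ : G,
    b₁ - a₁ ∈ P → b₁ - a₂ ∈ P → b₂ - a₁ ∈ P → b₂ - a₂ ∈ P →
    ∃ c : G, c - a₁ ∈ P ∧ c - a₂ ∈ P ∧ b₁ - c ∈ P ∧ b₂ - c ∈ P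

/-- `u` is an order unit for the cone `P`. -/
def IsOrderUnit {G : Type*} [AddCommGroup G] (P : Set G) (u : G) : Prop :=
  u ∈ P ∧ ∀ a : G, ∃ k : ℕ, 0 < k ∧ k • u - a ∈ P

/-- `(G, P)` is a simple dimension group: by the Effros-Handelman-Shen theorem, a
countable unperforated ordered abelian group with Riesz interpolation, in which every
nonzero positive element is an order unit. -/
def IsSimpleDimensionGroup {G : Type*} [AddCommGroup G] (P : Set G) : Prop :=
  Countable G ∧ IsPosCone P ∧ Unperforated P ∧ RieszInterp P ∧
    ∀ g ∈ P, g ≠ 0 → IsOrderUnit P g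

/-- A state on `(G, P)` with respect to the order unit `u`. -/
def IsState {G : Type*} [AddCommGroup G] (P : Set G) (u : G) (τ : G →+ ℝ) : Prop :=
  (∀ a ∈ P, 0 ≤ τ a) ∧ τ u = 1

/-- An extremal state: a state which is not a nontrivial convex combination of states. -/
def IsExtremalState {G : Type*} [AddCommGroup G] (P : Set G) (u : G) (τ : G →+ ℝ) : Prop :=
  IsState P u τ ∧ ∀ τ₁ τ₂ : G →+ ℝ, IsState P u τ₁ → IsState P u τ₂ →
    ∀ t : ℝ, 0 < t → t < 1 → (∀ g : G, τ g = t * τ₁ g + (1 - t) * τ₂ g) → τ₁ = τ₂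

section helpers
variable {G : Type*} [AddCommGroup G] {P : Set G}

lemma add_mem_insert (hP : IsPosCone P) :
    ∀ {a b : G}, a ∈ insert (0:G) P → b ∈ insert (0:G) P → a + b ∈ insert (0:G) P := by
  intro a b ha hb
  rcases Set.mem_insert_iff.mp ha with rfl | ha
  · simpa using hb
  · rcases Set.mem_insert_iff.mp hb with rfl | hb
    · simpa using Set.mem_insert_iff.mpr (Or.inr ha)
    · exact Set.mem_insert_iff.mpr (Or.inr (hP.1 a ha b hb))

lemma nsmul_mem_insert (hP : IsPosCone P) {g : G} (hg : g ∈ insert (0:G) P) :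
    ∀ k : ℕ, k • g ∈ insert (0:G) P := by
  intro k; induction k with
  | zero => simp
  | succ k ih => rw [succ_nsmul]; exact add_mem_insert hP ih hg

lemma interp_insert (hR : RieszInterp P) : RieszInterp (insert (0:G) P) := by
  intro a₁ a₂ b₁ b₂ h11 h12 h21 h22
  rcases Set.mem_insert_iff.mp h11 with h | h11
  · have e : b₁ = a₁ := sub_eq_zero.mp h
    exact ⟨b₁, by simp [e], h12, by simp, by rw [e]; exact h21⟩
  rcases Set.mem_insert_iff.mp h12 with h | h12
  · have e : b₁ = a₂ := sub_eq_zero.mp h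
    exact ⟨b₁, Set.mem_insert_iff.mpr (Or.inr h11), by simp [e], by simp, by rw [e]; exact h22⟩
  rcases Set.mem_insert_iff.mp h21 with h | h21
  · have e : b₂ = a₁ := sub_eq_zero.mp h
    exact ⟨b₂, by simp [e], h22, by rw [e]; exact Set.mem_insert_iff.mpr (Or.inr h11), by simp⟩
  rcases Set.mem_insert_iff.mp h22 with h | h22
  · have e : b₂ = a₂ := sub_eq_zero.mp h
    exact ⟨b₂, Set.mem_insert_iff.mpr (Or.inr h21), by simp [e],
      by rw [e]; exact Set.mem_insert_iff.mpr (Or.inr h12), by simp⟩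
  obtain ⟨c, hc1, hc2, hc3, hc4⟩ := hR a₁ a₂ b₁ b₂ h11 h12 h21 h22
  exact ⟨c, Set.mem_insert_iff.mpr (Or.inr hc1), Set.mem_insert_iff.mpr (Or.inr hc2),
    Set.mem_insert_iff.mpr (Or.inr hc3), Set.mem_insert_iff.mpr (Or.inr hc4)⟩

lemma decomp_lemma (hP : IsPosCone P) (hR : RieszInterp P) {g : G}
    (hg : g ∈ insert (0:G) P)
    (Q : G → Prop) (hQ0 : Q 0) (hQadd : ∀ a b, Q a → Q b → Q (a + b))
    (hall : ∀ e, e ∈ insert (0:G) P → g - e ∈ insert (0:G) P → Q e) :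
    ∀ (k : ℕ) (h : G), h ∈ insert (0:G) P → k • g - h ∈ insert (0:G) P → Q h := by
  intro k
  induction k with
  | zero =>
    intro h hh hh2
    rw [zero_smul] at hh2
    rcases Set.mem_insert_iff.mp hh2 with e | hh2
    · have : h = 0 := by
        have e' : -h = 0 := by simpa using e
        simpa using neg_eq_zero.mp e'
      rw [this]; exact hQ0
    rcases Set.mem_insert_iff.mp hh with rfl | hh
    · exact hQ0
    · have : h = 0 := hP.2.2 h hh (by simpa using hh2)
      rw [this]; exact hQ0
  | succ k ih =>
    intro h hh hh2
    have hkg : k • g ∈ insert (0:G) P := nsmul_mem_insert hP hg k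
    have cond1 : h - 0 ∈ insert (0:G) P := by simpa using hh
    have cond2 : h - (h - k • g) ∈ insert (0:G) P := by simpa using hkg
    have cond3 : g - 0 ∈ insert (0:G) P := by simpa using hg
    have cond4 : g - (h - k • g) ∈ insert (0:G) P := by
      have e : g - (h - k • g) = (k+1) • g - h := by rw [succ_nsmul]; abel
      rw [e]; exact hh2
    obtain ⟨c, hc1, hc2, hc3, hc4⟩ := interp_insert hR 0 (h - k • g) h g cond1 cond2 cond3 cond4
    have hc1' : c ∈ insert (0:G) P := by simpa using hc1
    have hQc : Q c := hall c hc1' hc4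
    have hrem : k • g - (h - c) ∈ insert (0:G) P := by
      have e : k • g - (h - c) = c - (h - k • g) := by abel
      rw [e]; exact hc2
    have hQr : Q (h - c) := ih (h - c) hc3 hrem
    have e : h = c + (h - c) := by abel
    rw [e]; exact hQadd _ _ hQc hQr

end helpers


set_option maxHeartbeats 1000000 in
theorem stmt6 {G : Type*} [AddCommGroup G] (P : Set G)
    (hG : IsSimpleDimensionGroup P)
    (u₁ u₂ : G) (hu : IsOrderUnit P (u₁ + u₂))
    (σ₁ σ₂ : G →+ ℝ)
    (hext₁ : IsExtremalState P (u₁ + u₂) σ₁)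
    (hext₂ : IsExtremalState P (u₁ + u₂) σ₂)
    (hne : σ₁ ≠ σ₂)
    (honly : ∀ τ : G →+ ℝ, IsExtremalState P (u₁ + u₂) τ → τ = σ₁ ∨ τ = σ₂)
    (h11 : σ₁ u₁ = 1) (h22 : σ₂ u₂ = 1) (h12 : σ₁ u₂ = 0) (h21 : σ₂ u₁ = 0) :
    Dense (Set.range fun g : G => ((σ₁ g, σ₂ g) : ℝ × ℝ)) := by
  obtain ⟨-, hcone, -, hR, hsimple⟩ := hG
  have memP₀ : ∀ {x : G}, x ∈ P → x ∈ insert (0:G) P :=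
    fun {x} hx => Set.mem_insert_iff.mpr (Or.inr hx)
  have pos₁ : ∀ a ∈ P, 0 ≤ σ₁ a := hext₁.1.1
  have pos₂ : ∀ a ∈ P, 0 ≤ σ₂ a := hext₂.1.1
  have hσ₁u : σ₁ (u₁ + u₂) = 1 := by rw [map_add, h11, h12]; ring
  have hσ₂u : σ₂ (u₁ + u₂) = 1 := by rw [map_add, h21, h22]; ring
  -- Claim 1: states are strictly positive on nonzero positive elements
  have claim1 : ∀ h ∈ P, h ≠ 0 → 0 < σ₁ h ∧ 0 < σ₂ h := by
    intro h hh hh0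
    obtain ⟨k, hk0, hku⟩ := (hsimple h hh hh0).2 (u₁ + u₂)
    have hk1 : (1:ℝ) ≤ (k:ℝ) := by exact_mod_cast hk0
    constructor
    · have h1 := pos₁ _ hku
      rw [map_sub, map_nsmul, hσ₁u, nsmul_eq_mul] at h1
      by_contra hle; push_neg at hle
      nlinarith [mul_nonneg (by linarith : (0:ℝ) ≤ (k:ℝ)) (by linarith : 0 ≤ -σ₁ h)]
    · have h1 := pos₂ _ hku
      rw [map_sub, map_nsmul, hσ₂u, nsmul_eq_mul] at h1
      by_contra hle; push_neg at hle
      nlinarith [mul_nonneg (by linarith : (0:ℝ) ≤ (k:ℝ)) (by linarith : 0 ≤ -σ₂ h)]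
  -- Claim 2: arbitrarily small nonzero positive elements
  have small : ∀ ε : ℝ, 0 < ε → ∃ g ∈ P, g ≠ 0 ∧ σ₁ g + σ₂ g < ε := by
    intro ε hε
    by_contra hcon; push_neg at hcon
    set S : Set ℝ := {x | ∃ g ∈ P, g ≠ 0 ∧ x = σ₁ g + σ₂ g} with hS
    have huP : (u₁ + u₂) ∈ P := hu.1
    have hune : (u₁ + u₂) ≠ 0 := by
      intro e; rw [e, map_zero] at hσ₁u; norm_num at hσ₁u
    have hSne : S.Nonempty := ⟨σ₁ (u₁ + u₂) + σ₂ (u₁ + u₂), ⟨u₁ + u₂, huP, hune, rfl⟩⟩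
    have hlb : ∀ x ∈ S, ε ≤ x := by
      rintro x ⟨g, hg, hg0, rfl⟩; exact hcon g hg hg0
    have hbdd : BddBelow S := ⟨ε, hlb⟩
    have hδε : ε ≤ sInf S := le_csInf hSne hlb
    have hδpos : 0 < sInf S := lt_of_lt_of_le hε hδε
    obtain ⟨x, hxS, hxlt⟩ := exists_lt_of_csInf_lt hSne (by linarith : sInf S < 2 * sInf S)
    obtain ⟨g, hg, hg0, rfl⟩ := hxS
    have hQ : ∀ h ∈ insert (0:G) P, ∃ n : ℤ, h = n • g := by
      intro h hh
      obtain ⟨k, hk0, hkg⟩ := (hsimple g hg hg0).2 h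
      refine decomp_lemma hcone hR (memP₀ hg) (fun x => ∃ n : ℤ, x = n • g)
        ⟨0, by simp⟩ ?_ ?_ k h hh (memP₀ hkg)
      · rintro a b ⟨n, rfl⟩ ⟨m, rfl⟩; exact ⟨n + m, by rw [add_smul]⟩
      · intro e he hge
        by_cases he0 : e = 0
        · exact ⟨0, by simp [he0]⟩
        by_cases hge0 : g - e = 0
        · exact ⟨1, by rw [one_smul]; exact (sub_eq_zero.mp hge0).symm⟩
        have heP : e ∈ P := (Set.mem_insert_iff.mp he).resolve_left he0
        have hgeP : g - e ∈ P := (Set.mem_insert_iff.mp hge).resolve_left hge0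
        have h1 : sInf S ≤ σ₁ e + σ₂ e := csInf_le hbdd ⟨e, heP, he0, rfl⟩
        have h2 : sInf S ≤ σ₁ (g - e) + σ₂ (g - e) := csInf_le hbdd ⟨g - e, hgeP, hge0, rfl⟩
        rw [map_sub, map_sub] at h2
        exfalso; linarith
    obtain ⟨a, haP, b, hbP, hab⟩ := hcone.2.1 u₁
    obtain ⟨n, hn⟩ := hQ a (memP₀ haP)
    obtain ⟨m, hm⟩ := hQ b (memP₀ hbP)
    have hu₁ : u₁ = (n - m) • g := by rw [hab, hn, hm, sub_smul]
    have h2g : 0 < σ₂ g := (claim1 g hg hg0).2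
    have hval : (0:ℝ) = ((n - m : ℤ) : ℝ) * σ₂ g := by
      rw [← h21, hu₁, map_zsmul, zsmul_eq_mul]
    have hnm : ((n - m : ℤ) : ℝ) = 0 := by
      rcases mul_eq_zero.mp hval.symm with h | h
      · exact h
      · exact absurd h (ne_of_gt h2g)
    have : u₁ = 0 := by
      have : (n - m : ℤ) = 0 := by exact_mod_cast hnm
      rw [hu₁, this, zero_smul]
    rw [this, map_zero] at h11; norm_num at h11
  -- Claim 3: two small non-proportional positive elements
  have indep : ∀ ε : ℝ, 0 < ε → ∃ g ∈ P, ∃ g' ∈ P, g ≠ 0 ∧ g' ≠ 0 ∧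
      σ₁ g + σ₂ g < ε ∧ σ₁ g' + σ₂ g' < ε ∧ σ₁ g * σ₂ g' ≠ σ₁ g' * σ₂ g := by
    intro ε hε
    obtain ⟨g, hg, hg0, hgs⟩ := small ε hε
    by_contra hcon; push_neg at hcon
    have hQ : ∀ h ∈ insert (0:G) P, σ₂ h * σ₁ g = σ₁ h * σ₂ g := by
      intro h hh
      obtain ⟨k, hk0, hkg⟩ := (hsimple g hg hg0).2 h
      refine decomp_lemma hcone hR (memP₀ hg) (fun x => σ₂ x * σ₁ g = σ₁ x * σ₂ g)
        (by simp) ?_ ?_ k h hh (memP₀ hkg)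
      · intro a b ha hb
        rw [map_add, map_add, add_mul, add_mul, ha, hb]
      · intro e he hge
        by_cases he0 : e = 0
        · simp [he0]
        by_cases hge0 : g - e = 0
        · have : e = g := by
            have := sub_eq_zero.mp hge0; exact this.symm
          rw [this]; ring
        have heP : e ∈ P := (Set.mem_insert_iff.mp he).resolve_left he0
        have hgeP : g - e ∈ P := (Set.mem_insert_iff.mp hge).resolve_left hge0
        have b1 : 0 ≤ σ₁ g - σ₁ e := by have := pos₁ _ hgeP; rwa [map_sub] at this
        have b2 : 0 ≤ σ₂ g - σ₂ e := by have := pos₂ _ hgeP; rwa [map_sub] at this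
        have hes : σ₁ e + σ₂ e < ε := by linarith
        have := hcon g hg e heP hg0 he0 hgs hes
        rw [mul_comm]; exact this
    obtain ⟨a, haP, b, hbP, hab⟩ := hcone.2.1 u₁
    have qa := hQ a (memP₀ haP)
    have qb := hQ b (memP₀ hbP)
    have hq : σ₂ u₁ * σ₁ g = σ₁ u₁ * σ₂ g := by
      rw [hab, map_sub, map_sub, sub_mul, sub_mul, qa, qb]
    rw [h21, h11, zero_mul, one_mul] at hq
    have h2g : 0 < σ₂ g := (claim1 g hg hg0).2
    linarith
  -- Density
  rw [Metric.dense_iff]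
  intro p r hr
  obtain ⟨g, hg, g', hg', hg0, hg'0, hs, hs', hind⟩ := indep (r/3) (by linarith)
  have d0 : σ₁ g * σ₂ g' - σ₁ g' * σ₂ g ≠ 0 := sub_ne_zero.mpr hind
  set x := p.1 with hxdef
  set y := p.2 with hydef
  set a : ℝ := (x * σ₂ g' - y * σ₁ g') / (σ₁ g * σ₂ g' - σ₁ g' * σ₂ g) with ha
  set b : ℝ := (y * σ₁ g - x * σ₂ g) / (σ₁ g * σ₂ g' - σ₁ g' * σ₂ g) with hb
  have hx : a * σ₁ g + b * σ₁ g' = x := by rw [ha, hb, div_mul_eq_mul_div, div_mul_eq_mul_div, ← add_div, div_eq_iff d0]; ring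
  have hy : a * σ₂ g + b * σ₂ g' = y := by rw [ha, hb, div_mul_eq_mul_div, div_mul_eq_mul_div, ← add_div, div_eq_iff d0]; ring
  refine ⟨(σ₁ (⌊a⌋ • g + ⌊b⌋ • g'), σ₂ (⌊a⌋ • g + ⌊b⌋ • g')), ?_, ⟨_, rfl⟩⟩
  rw [Metric.mem_ball, Prod.dist_eq]
  have e1 : σ₁ (⌊a⌋ • g + ⌊b⌋ • g') = (⌊a⌋ : ℝ) * σ₁ g + (⌊b⌋ : ℝ) * σ₁ g' := by
    rw [map_add, map_zsmul, map_zsmul, zsmul_eq_mul, zsmul_eq_mul]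
  have e2 : σ₂ (⌊a⌋ • g + ⌊b⌋ • g') = (⌊a⌋ : ℝ) * σ₂ g + (⌊b⌋ : ℝ) * σ₂ g' := by
    rw [map_add, map_zsmul, map_zsmul, zsmul_eq_mul, zsmul_eq_mul]
  have fa0 : 0 ≤ a - ⌊a⌋ := by linarith [Int.floor_le a]
  have fa1 : a - ⌊a⌋ ≤ 1 := by linarith [Int.lt_floor_add_one a]
  have fb0 : 0 ≤ b - ⌊b⌋ := by linarith [Int.floor_le b]
  have fb1 : b - ⌊b⌋ ≤ 1 := by linarith [Int.lt_floor_add_one b]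
  have p1g := pos₁ _ hg
  have p1g' := pos₁ _ hg'
  have p2g := pos₂ _ hg
  have p2g' := pos₂ _ hg'
  have d1 : dist (σ₁ (⌊a⌋ • g + ⌊b⌋ • g')) x < r := by
    rw [Real.dist_eq, e1, abs_lt]
    constructor
    · nlinarith [mul_nonneg (by linarith : (0:ℝ) ≤ 1 - (a - ⌊a⌋)) p1g,
        mul_nonneg (by linarith : (0:ℝ) ≤ 1 - (b - ⌊b⌋)) p1g']
    · nlinarith [mul_nonneg fa0 p1g, mul_nonneg fb0 p1g']
  have d2 : dist (σ₂ (⌊a⌋ • g + ⌊b⌋ • g')) y < r := by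
    rw [Real.dist_eq, e2, abs_lt]
    constructor
    · nlinarith [mul_nonneg (by linarith : (0:ℝ) ≤ 1 - (a - ⌊a⌋)) p2g,
        mul_nonneg (by linarith : (0:ℝ) ≤ 1 - (b - ⌊b⌋)) p2g']
    · nlinarith [mul_nonneg fa0 p2g, mul_nonneg fb0 p2g']
  exact max_lt d1 d2
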